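/- For all x ≥ e, ∫_x^∞ √y·(log y + 1)/(y² log² y) dy exists and satisfies 2/(√x log x) − 2/(√x log² x) ≤ ∫_x^∞ (log y + 1)/(y^{3/2} log² y) dy ≤ 2/(√x log x) − 2/(√x log² x) + 8/(√x log³ x). -/

import Mathlib

open MeasureTheory Real Filter Set Topology

/-- `y^(3/2) = y * √y` for positive `y`. -/
lemma rpow_three_halves {y : ℝ} (hy : 0 < y) :
    y ^ ((3 : ℝ) / 2) = y * Real.sqrt y := by
  rw [show (3 : ℝ)/2 = 1 + 1/2 by norm_num, Real.rpow_add hy, Real.rpow_one,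
    ← Real.sqrt_eq_rpow]

lemma F_deriv {y : ℝ} (hy : 1 < y) :
    HasDerivAt (fun y : ℝ => 2 / (Real.sqrt y * (Real.log y) ^ 2) - 2 / (Real.sqrt y * Real.log y))
      ((Real.log y + 1) / (y ^ ((3 : ℝ) / 2) * (Real.log y) ^ 2)
        - 4 / (y ^ ((3 : ℝ) / 2) * (Real.log y) ^ 3)) y := by
  have hy0 : (0 : ℝ) < y := lt_trans zero_lt_one hy
  obtain ⟨s, hs0, rfl⟩ : ∃ s : ℝ, 0 < s ∧ y = s ^ 2 :=
    ⟨Real.sqrt y, Real.sqrt_pos.mpr hy0, (Real.sq_sqrt hy0.le).symm⟩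
  have hss : Real.sqrt (s ^ 2) = s := Real.sqrt_sq hs0.le
  have hrp : (s ^ 2 : ℝ) ^ ((3 : ℝ) / 2) = s ^ (3 : ℕ) := by
    rw [← Real.rpow_natCast s 2, ← Real.rpow_mul hs0.le, ← Real.rpow_natCast s 3]
    norm_num
  have hL : 0 < Real.log (s ^ 2) := Real.log_pos hy
  have hds : HasDerivAt Real.sqrt (1 / (2 * Real.sqrt (s ^ 2))) (s ^ 2) :=
    Real.hasDerivAt_sqrt hy0.ne'
  have hdl : HasDerivAt Real.log (1 / (s ^ 2)) (s ^ 2) := by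
    simpa [one_div] using Real.hasDerivAt_log hy0.ne'
  have hdl2 : HasDerivAt (fun y : ℝ => (Real.log y) ^ 2)
      (2 * (Real.log (s ^ 2)) ^ 1 * (1 / (s ^ 2))) (s ^ 2) := hdl.pow 2
  have hv : HasDerivAt (fun y : ℝ => Real.sqrt y * (Real.log y) ^ 2)
      ((1 / (2 * Real.sqrt (s ^ 2))) * (Real.log (s ^ 2)) ^ 2
        + Real.sqrt (s ^ 2) * (2 * (Real.log (s ^ 2)) ^ 1 * (1 / (s ^ 2)))) (s ^ 2) :=
    hds.mul hdl2
  have hu : HasDerivAt (fun y : ℝ => Real.sqrt y * Real.log y)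
      ((1 / (2 * Real.sqrt (s ^ 2))) * Real.log (s ^ 2)
        + Real.sqrt (s ^ 2) * (1 / (s ^ 2))) (s ^ 2) := hds.mul hdl
  have hvne : Real.sqrt (s ^ 2) * (Real.log (s ^ 2)) ^ 2 ≠ 0 := by
    rw [hss]; positivity
  have hune : Real.sqrt (s ^ 2) * Real.log (s ^ 2) ≠ 0 := by
    rw [hss]; positivity
  have h := ((hasDerivAt_const (s ^ 2) (2 : ℝ)).div hv hvne).sub
    ((hasDerivAt_const (s ^ 2) (2 : ℝ)).div hu hune)
  refine h.congr_deriv ?_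
  rw [hss, hrp]
  have hs1 : 1 < s := by nlinarith
  have hlog : 0 < Real.log s := Real.log_pos hs1
  have hlne : Real.log s ≠ 0 := hlog.ne'
  field_simp
  ring

theorem integral_bounds (x : ℝ) (hx : Real.exp 1 ≤ x) :
    IntegrableOn (fun y : ℝ => (Real.log y + 1) / (y ^ ((3 : ℝ) / 2) * (Real.log y) ^ 2))
      (Set.Ioi x) ∧
    2 / (Real.sqrt x * Real.log x) - 2 / (Real.sqrt x * (Real.log x) ^ 2) ≤
      (∫ y in Set.Ioi x, (Real.log y + 1) / (y ^ ((3 : ℝ) / 2) * (Real.log y) ^ 2)) ∧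
    (∫ y in Set.Ioi x, (Real.log y + 1) / (y ^ ((3 : ℝ) / 2) * (Real.log y) ^ 2)) ≤
      2 / (Real.sqrt x * Real.log x) - 2 / (Real.sqrt x * (Real.log x) ^ 2) +
        8 / (Real.sqrt x * (Real.log x) ^ 3) := by
  have he : (1 : ℝ) < Real.exp 1 := by
    have := Real.add_one_le_exp 1; linarith
  have hx1 : (1 : ℝ) < x := lt_of_lt_of_le he hx
  have hx0 : (0 : ℝ) < x := lt_trans zero_lt_one hx1
  have hLx : 1 ≤ Real.log x := (Real.le_log_iff_exp_le hx0).mpr hx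
  have hLx0 : 0 < Real.log x := lt_of_lt_of_le zero_lt_one hLx
  have hsx : 0 < Real.sqrt x := Real.sqrt_pos.mpr hx0
  have hy1 : ∀ y ∈ Set.Ioi x, 1 < y := fun y hy => lt_trans hx1 hy
  have hLy : ∀ y ∈ Set.Ioi x, Real.log x ≤ Real.log y := fun y hy =>
    (Real.log_le_log_iff hx0 (lt_trans hx0 hy)).mpr (le_of_lt hy)
  set f : ℝ → ℝ := fun y => (Real.log y + 1) / (y ^ ((3 : ℝ) / 2) * (Real.log y) ^ 2) with hf_def
  set g : ℝ → ℝ := fun y => 4 / (y ^ ((3 : ℝ) / 2) * (Real.log y) ^ 3) with hg_def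
  -- continuity on Ioi x
  have hcf : ∀ y ∈ Set.Ioi x, ContinuousAt f y := by
    intro y hy
    have h1 : 1 < y := hy1 y hy
    have hy0 : (0 : ℝ) < y := lt_trans zero_lt_one h1
    have hL : 0 < Real.log y := Real.log_pos h1
    have hne : y ^ ((3 : ℝ) / 2) * (Real.log y) ^ 2 ≠ 0 := by positivity
    exact ((Real.continuousAt_log hy0.ne').add continuousAt_const).div
      ((Real.continuousAt_rpow_const y _ (Or.inl hy0.ne')).mul
        ((Real.continuousAt_log hy0.ne').pow 2)) hne
  have hcg : ∀ y ∈ Set.Ioi x, ContinuousAt g y := by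
    intro y hy
    have h1 : 1 < y := hy1 y hy
    have hy0 : (0 : ℝ) < y := lt_trans zero_lt_one h1
    have hL : 0 < Real.log y := Real.log_pos h1
    have hne : y ^ ((3 : ℝ) / 2) * (Real.log y) ^ 3 ≠ 0 := by positivity
    exact continuousAt_const.div
      ((Real.continuousAt_rpow_const y _ (Or.inl hy0.ne')).mul
        ((Real.continuousAt_log hy0.ne').pow 3)) hne
  -- dominating function
  have hdom : IntegrableOn (fun y : ℝ => 4 * y ^ (-(3 : ℝ) / 2)) (Set.Ioi x) := by
    have := (integrableOn_Ioi_rpow_of_lt (show (-(3:ℝ)/2) < -1 by norm_num) hx0)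
    exact this.const_mul 4
  have hbound : ∀ y ∈ Set.Ioi x,
      f y ≤ 4 * y ^ (-(3 : ℝ) / 2) ∧ 0 ≤ f y ∧ g y ≤ 4 * y ^ (-(3 : ℝ) / 2) ∧ 0 ≤ g y := by
    intro y hy
    have h1 : 1 < y := hy1 y hy
    have hy0 : (0 : ℝ) < y := lt_trans zero_lt_one h1
    have hL : 1 ≤ Real.log y := hLx.trans (hLy y hy)
    have hL0 : 0 < Real.log y := lt_of_lt_of_le zero_lt_one hL
    have hyp : 0 < y ^ ((3 : ℝ) / 2) := Real.rpow_pos_of_pos hy0 _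
    have hneg : y ^ (-(3 : ℝ) / 2) = (y ^ ((3 : ℝ) / 2))⁻¹ := by
      rw [show (-(3:ℝ)/2) = -((3:ℝ)/2) by norm_num, Real.rpow_neg hy0.le]
    refine ⟨?_, by positivity, ?_, by positivity⟩
    · rw [hf_def, hneg, div_le_iff₀ (by positivity),
        show 4 * (y ^ ((3 : ℝ) / 2))⁻¹ * (y ^ ((3 : ℝ) / 2) * (Real.log y) ^ 2)
          = 4 * (Real.log y) ^ 2 * ((y ^ ((3 : ℝ) / 2))⁻¹ * y ^ ((3 : ℝ) / 2)) by ring,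
        inv_mul_cancel₀ hyp.ne']
      nlinarith
    · rw [hg_def, hneg, div_le_iff₀ (by positivity),
        show 4 * (y ^ ((3 : ℝ) / 2))⁻¹ * (y ^ ((3 : ℝ) / 2) * (Real.log y) ^ 3)
          = 4 * (Real.log y) ^ 3 * ((y ^ ((3 : ℝ) / 2))⁻¹ * y ^ ((3 : ℝ) / 2)) by ring,
        inv_mul_cancel₀ hyp.ne']
      nlinarith [pow_le_pow_left₀ (le_of_lt zero_lt_one) hL 3]
  have hmf : AEStronglyMeasurable f (volume.restrict (Set.Ioi x)) :=
    (ContinuousOn.aestronglyMeasurable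
      (fun y hy => (hcf y hy).continuousWithinAt) measurableSet_Ioi)
  have hmg : AEStronglyMeasurable g (volume.restrict (Set.Ioi x)) :=
    (ContinuousOn.aestronglyMeasurable
      (fun y hy => (hcg y hy).continuousWithinAt) measurableSet_Ioi)
  have hintf : IntegrableOn f (Set.Ioi x) := by
    refine hdom.mono' hmf ?_
    filter_upwards [ae_restrict_mem measurableSet_Ioi] with y hy
    rcases hbound y hy with ⟨h1, h2, _, _⟩
    rw [Real.norm_eq_abs, abs_of_nonneg h2]; exact h1
  have hintg : IntegrableOn g (Set.Ioi x) := by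
    refine hdom.mono' hmg ?_
    filter_upwards [ae_restrict_mem measurableSet_Ioi] with y hy
    rcases hbound y hy with ⟨_, _, h3, h4⟩
    rw [Real.norm_eq_abs, abs_of_nonneg h4]; exact h3
  -- FTC on Ioi x
  set F : ℝ → ℝ := fun y =>
    2 / (Real.sqrt y * (Real.log y) ^ 2) - 2 / (Real.sqrt y * Real.log y) with hF_def
  have hFcont : ContinuousWithinAt F (Set.Ici x) x := by
    have h1 : Real.sqrt x * (Real.log x) ^ 2 ≠ 0 := by positivity
    have h2 : Real.sqrt x * Real.log x ≠ 0 := by positivity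
    have hcs : ContinuousAt Real.sqrt x := Real.continuous_sqrt.continuousAt
    have hcl : ContinuousAt Real.log x := Real.continuousAt_log hx0.ne'
    exact (((continuousAt_const.div (hcs.mul (hcl.pow 2)) h1).sub
      (continuousAt_const.div (hcs.mul hcl) h2))).continuousWithinAt
  have hFderiv : ∀ y ∈ Set.Ioi x, HasDerivAt F (f y - g y) y := fun y hy =>
    F_deriv (hy1 y hy)
  have hFtend : Tendsto F atTop (𝓝 0) := by
    have hs : Tendsto Real.sqrt atTop atTop := by
      refine (tendsto_rpow_atTop (by norm_num : (0:ℝ) < 1/2)).congr fun y => ?_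
      rw [Real.sqrt_eq_rpow]
    have hl : Tendsto Real.log atTop atTop := Real.tendsto_log_atTop
    have t1 : Tendsto (fun y : ℝ => Real.sqrt y * (Real.log y) ^ 2) atTop atTop :=
      hs.atTop_mul_atTop₀ (hl.comp tendsto_id |>.atTop_mul_atTop₀ (hl.comp tendsto_id) |>.congr
        (fun y => by simp [sq]))
    have t2 : Tendsto (fun y : ℝ => Real.sqrt y * Real.log y) atTop atTop :=
      hs.atTop_mul_atTop₀ hl
    have e1 : Tendsto (fun y : ℝ => 2 / (Real.sqrt y * (Real.log y) ^ 2)) atTop (𝓝 0) :=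
      tendsto_const_nhds.div_atTop t1
    have e2 : Tendsto (fun y : ℝ => 2 / (Real.sqrt y * Real.log y)) atTop (𝓝 0) :=
      tendsto_const_nhds.div_atTop t2
    simpa using e1.sub e2
  have key : (∫ y in Set.Ioi x, (f y - g y)) = 0 - F x :=
    integral_Ioi_of_hasDerivAt_of_tendsto hFcont hFderiv (hintf.sub hintg) hFtend
  rw [integral_sub hintf hintg] at key
  have hFx : 0 - F x = 2 / (Real.sqrt x * Real.log x) - 2 / (Real.sqrt x * (Real.log x) ^ 2) := by
    rw [hF_def]; ring
  -- integral of g bounds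
  have hg0 : 0 ≤ ∫ y in Set.Ioi x, g y :=
    setIntegral_nonneg measurableSet_Ioi fun y hy => (hbound y hy).2.2.2
  have hrint : IntegrableOn (fun y : ℝ => 4 / (Real.log x) ^ 3 * y ^ (-(3 : ℝ) / 2))
      (Set.Ioi x) :=
    (integrableOn_Ioi_rpow_of_lt (show (-(3:ℝ)/2) < -1 by norm_num) hx0).const_mul _
  have hgle : (∫ y in Set.Ioi x, g y) ≤
      ∫ y in Set.Ioi x, 4 / (Real.log x) ^ 3 * y ^ (-(3 : ℝ) / 2) := by
    refine setIntegral_mono_on hintg hrint measurableSet_Ioi fun y hy => ?_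
    have h1 : 1 < y := hy1 y hy
    have hy0 : (0 : ℝ) < y := lt_trans zero_lt_one h1
    have hL : Real.log x ≤ Real.log y := hLy y hy
    have hL0 : 0 < Real.log y := lt_of_lt_of_le hLx0 hL
    have hyp : 0 < y ^ ((3 : ℝ) / 2) := Real.rpow_pos_of_pos hy0 _
    have hneg : y ^ (-(3 : ℝ) / 2) = (y ^ ((3 : ℝ) / 2))⁻¹ := by
      rw [show (-(3:ℝ)/2) = -((3:ℝ)/2) by norm_num, Real.rpow_neg hy0.le]
    have heq : 4 / (Real.log x) ^ 3 * y ^ (-(3 : ℝ) / 2)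
        = 4 / (y ^ ((3:ℝ)/2) * (Real.log x) ^ 3) := by
      rw [hneg]; field_simp
    rw [hg_def, heq]
    have hcube : (Real.log x) ^ 3 ≤ (Real.log y) ^ 3 :=
      pow_le_pow_left₀ hLx0.le hL 3
    apply div_le_div_of_nonneg_left (by norm_num) (by positivity)
    exact mul_le_mul_of_nonneg_left hcube (le_of_lt hyp)
  have hval : (∫ y in Set.Ioi x, 4 / (Real.log x) ^ 3 * y ^ (-(3 : ℝ) / 2))
      = 8 / (Real.sqrt x * (Real.log x) ^ 3) := by
    rw [MeasureTheory.integral_const_mul,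
      integral_Ioi_rpow_of_lt (show (-(3:ℝ)/2) < -1 by norm_num) hx0]
    have : x ^ ((-(3:ℝ)/2) + 1) = (Real.sqrt x)⁻¹ := by
      rw [show (-(3:ℝ)/2) + 1 = -(1/2) by norm_num, Real.rpow_neg hx0.le,
        ← Real.sqrt_eq_rpow]
    rw [this]
    rw [show (-(3:ℝ)/2) + 1 = -(1/2 : ℝ) by norm_num]
    field_simp
    ring
  have h8 : (∫ y in Set.Ioi x, g y) ≤ 8 / (Real.sqrt x * (Real.log x) ^ 3) :=
    hgle.trans (le_of_eq hval)
  have hIf : (∫ y in Set.Ioi x, f y) = integral (volume.restrict (Set.Ioi x)) f := rfl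
  have hIg : (∫ y in Set.Ioi x, g y) = integral (volume.restrict (Set.Ioi x)) g := rfl
  have keyf : integral (volume.restrict (Set.Ioi x)) f
      = integral (volume.restrict (Set.Ioi x)) g + (0 - F x) := by
    rw [← hIf, ← hIg]; linarith [key]
  refine ⟨hintf, ?_, ?_⟩
  · rw [keyf, ← hIg, hFx]
    exact le_add_of_nonneg_left hg0
  · calc integral (volume.restrict (Set.Ioi x)) f
        = integral (volume.restrict (Set.Ioi x)) g + (0 - F x) := keyf
      _ ≤ 8 / (Real.sqrt x * (Real.log x) ^ 3) + (0 - F x) := by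
          apply add_le_add_left; rw [← hIg]; exact h8
      _ = 2 / (Real.sqrt x * Real.log x) - 2 / (Real.sqrt x * (Real.log x) ^ 2) +
            8 / (Real.sqrt x * (Real.log x) ^ 3) := by rw [hFx]; ring
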